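/- For u(x) = |x|²/2 + c|x|^{2-n} on ℝⁿ \ {0} (n ≥ 3) and j ≥ 2, the (1,j) cofactor of the Hessian satisfies cof(D²u)_{1j} = cn(2-n)|x|^{-n-2}x₁x_j + O(|x|^{-2n}) as |x| → ∞. -/

import Mathlib

open EuclideanSpace Metric

/-- Partial derivative in direction `i`. -/
noncomputable def pd {n : ℕ} (f : EuclideanSpace ℝ (Fin n) → ℝ) (i : Fin n)
    (x : EuclideanSpace ℝ (Fin n)) : ℝ :=
  fderiv ℝ f x (EuclideanSpace.single i 1)

/-- Second partial derivative `∂_i ∂_j f`. -/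
noncomputable def pd2 {n : ℕ} (f : EuclideanSpace ℝ (Fin n) → ℝ) (i j : Fin n)
    (x : EuclideanSpace ℝ (Fin n)) : ℝ :=
  pd (pd f j) i x

/-- Hessian matrix of `f` at `x`. -/
noncomputable def hess {n : ℕ} (f : EuclideanSpace ℝ (Fin n) → ℝ)
    (x : EuclideanSpace ℝ (Fin n)) : Matrix (Fin n) (Fin n) ℝ :=
  Matrix.of fun i j => pd2 f i j x

/-- The `(i,j)` cofactor of a matrix. -/
noncomputable def cof {n : ℕ} (M : Matrix (Fin n) (Fin n) ℝ) (i j : Fin n) : ℝ :=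
  M.adjugate j i

section Aux

open scoped RealInnerProductSpace
open Matrix Finset

/- ### Matrix part -/

lemma key_sq {n : ℕ} (v : Fin n → ℝ) :
    (Matrix.replicateCol (Fin 1) v * Matrix.replicateRow (Fin 1) v) * (Matrix.replicateCol (Fin 1) v * Matrix.replicateRow (Fin 1) v)
      = (∑ l, v l * v l) • (Matrix.replicateCol (Fin 1) v * Matrix.replicateRow (Fin 1) v) := by
  ext i k
  simp [Matrix.mul_apply, Matrix.replicateCol_apply, Matrix.replicateRow_apply, Finset.sum_mul, Finset.mul_sum]
  apply Finset.sum_congr rfl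
  intros; ring

lemma adjugate_rank_one_aux {m : ℕ} (α b : ℝ) (v : Fin (m + 2) → ℝ)
    (hα : α ≠ 0) (hs : α + b * ∑ l, v l * v l ≠ 0) :
    Matrix.adjugate (Matrix.of fun i k => (if i = k then α else 0) + b * v i * v k) =
      Matrix.of fun i k => α ^ m *
        ((α + b * ∑ l, v l * v l) * (if i = k then 1 else 0) - b * v i * v k) := by
  set S := ∑ l, v l * v l with hS
  set P : Matrix (Fin (m+2)) (Fin (m+2)) ℝ := Matrix.replicateCol (Fin 1) v * Matrix.replicateRow (Fin 1) v with hP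
  have hPapp : ∀ i k, P i k = v i * v k := by
    intro i k; simp [hP, Matrix.mul_apply]
  set M : Matrix (Fin (m+2)) (Fin (m+2)) ℝ :=
    Matrix.of fun i k => (if i = k then α else 0) + b * v i * v k with hM
  have hMeq : M = α • (1 : Matrix (Fin (m+2)) (Fin (m+2)) ℝ) + b • P := by
    ext i k
    by_cases h : i = k <;> simp [hM, hPapp, Matrix.one_apply, h] <;> ring
  set N : Matrix (Fin (m+2)) (Fin (m+2)) ℝ := Matrix.of fun i k => α ^ m *
        ((α + b * S) * (if i = k then 1 else 0) - b * v i * v k) with hN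
  have hNeq : N = (α ^ m * (α + b * S)) • (1 : Matrix (Fin (m+2)) (Fin (m+2)) ℝ)
      - (α ^ m * b) • P := by
    ext i k
    by_cases h : i = k <;> simp [hN, hPapp, Matrix.one_apply, h] <;> ring
  set D : ℝ := α ^ (m + 1) * (α + b * S) with hD
  have hMP : M * P = (α + b * S) • P := by
    rw [hMeq, Matrix.add_mul, Matrix.smul_mul, Matrix.one_mul, Matrix.smul_mul, hP, key_sq,
      ← hS, ← hP, smul_smul, ← add_smul]
  have hMN : M * N = D • 1 := by
    rw [hNeq, Matrix.mul_sub, Matrix.mul_smul, Matrix.mul_one, Matrix.mul_smul, hMP]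
    rw [hMeq, hD]
    module
  have hdet : M.det = D := by
    have hform : M = α • ((1 : Matrix (Fin (m+2)) (Fin (m+2)) ℝ)
        + Matrix.replicateCol (Fin 1) (fun i => b / α * v i) * Matrix.replicateRow (Fin 1) v) := by
      ext i k
      by_cases h : i = k <;>
        simp [hM, Matrix.mul_apply, Matrix.one_apply, h, mul_add] <;>
        field_simp <;> ring
    rw [hform, Matrix.det_smul]
    erw [Matrix.det_one_add_replicateCol_mul_replicateRow]
    have : (v ⬝ᵥ fun i => b / α * v i) = b / α * S := by
      simp [dotProduct, hS, Finset.mul_sum]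
      apply Finset.sum_congr rfl
      intros; ring
    rw [this, hD]
    field_simp
    ring
    rw [Fintype.card_fin, pow_add]
  have hunit : IsUnit M.det := by
    rw [hdet, hD]
    exact (mul_ne_zero (pow_ne_zero _ hα) hs).isUnit
  have h1 : M * Matrix.adjugate M = M * N := by
    rw [Matrix.mul_adjugate, hdet, hMN]
  calc Matrix.adjugate M = (M⁻¹ * M) * Matrix.adjugate M := by
        rw [Matrix.nonsing_inv_mul _ hunit, Matrix.one_mul]
    _ = (M⁻¹ * M) * N := by rw [Matrix.mul_assoc, h1, ← Matrix.mul_assoc]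
    _ = N := by rw [Matrix.nonsing_inv_mul _ hunit, Matrix.one_mul]

lemma adjugate_rank_one {n : ℕ} (hn : 2 ≤ n) (α b : ℝ) (v : Fin n → ℝ)
    (hα : α ≠ 0) (hs : α + b * ∑ l, v l * v l ≠ 0) :
    Matrix.adjugate (Matrix.of fun i k => (if i = k then α else 0) + b * v i * v k) =
      Matrix.of fun i k => α ^ (n - 2) *
        ((α + b * ∑ l, v l * v l) * (if i = k then 1 else 0) - b * v i * v k) := by
  obtain ⟨m, rfl⟩ : ∃ m, n = m + 2 := ⟨n - 2, by omega⟩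
  simpa using adjugate_rank_one_aux α b v hα hs

/- ### Calculus part -/

variable {n : ℕ}

lemma hasFDerivAt_inner_self (x : EuclideanSpace ℝ (Fin n)) :
    HasFDerivAt (fun y : EuclideanSpace ℝ (Fin n) => ⟪y, y⟫) ((2:ℝ) • innerSL ℝ x) x := by
  have h := (hasFDerivAt_id x).inner ℝ (hasFDerivAt_id x)
  refine h.congr_fderiv ?_
  ext v
  simp [fderivInnerCLM_apply, real_inner_comm, two_smul]

lemma hasFDerivAt_inner_rpow (x : EuclideanSpace ℝ (Fin n)) (hx : x ≠ 0) (e : ℝ) :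
    HasFDerivAt (fun y : EuclideanSpace ℝ (Fin n) => ⟪y, y⟫ ^ e)
      ((2 * e * ⟪x, x⟫ ^ (e - 1)) • innerSL ℝ x) x := by
  have ht : ⟪x, x⟫ ≠ 0 := by
    rw [real_inner_self_eq_norm_sq]
    exact pow_ne_zero 2 (norm_ne_zero_iff.mpr hx)
  have h := (Real.hasDerivAt_rpow_const (p := e) (Or.inl ht)).comp_hasFDerivAt
    (f := fun y : EuclideanSpace ℝ (Fin n) => ⟪y, y⟫) x (hasFDerivAt_inner_self x)
  refine h.congr_fderiv ?_
  ext v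
  simp
  ring

lemma u_repr (c : ℝ) :
    (fun y : EuclideanSpace ℝ (Fin n) => ‖y‖ ^ 2 / 2 + c * ‖y‖ ^ ((2 : ℝ) - n)) =
      fun y => (1 / 2 : ℝ) * ⟪y, y⟫ + c * ⟪y, y⟫ ^ (((2 : ℝ) - n) / 2) := by
  funext y
  rw [real_inner_self_eq_norm_sq]
  have h2 : ‖y‖ ^ ((2 : ℝ) - n) = ((‖y‖ ^ 2 : ℝ)) ^ (((2 : ℝ) - n) / 2) := by
    rw [← Real.rpow_natCast ‖y‖ 2, ← Real.rpow_mul (norm_nonneg y)]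
    congr 1
    push_cast
    ring
  rw [h2]
  ring

lemma hasFDerivAt_u (c : ℝ) (x : EuclideanSpace ℝ (Fin n)) (hx : x ≠ 0) :
    HasFDerivAt (fun y : EuclideanSpace ℝ (Fin n) =>
        (1 / 2 : ℝ) * ⟪y, y⟫ + c * ⟪y, y⟫ ^ (((2 : ℝ) - n) / 2))
      ((1 + c * ((2 : ℝ) - n) * ⟪x, x⟫ ^ (((2 : ℝ) - n) / 2 - 1)) • innerSL ℝ x) x := by
  have h1 := (hasFDerivAt_inner_self x).const_mul (1 / 2 : ℝ)
  have h2 := (hasFDerivAt_inner_rpow x hx (((2 : ℝ) - n) / 2)).const_mul c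
  have h := h1.add h2
  refine h.congr_fderiv ?_
  ext v
  simp
  ring

lemma pd_u (c : ℝ) (j : Fin n) (x : EuclideanSpace ℝ (Fin n)) (hx : x ≠ 0) :
    pd (fun y => ‖y‖ ^ 2 / 2 + c * ‖y‖ ^ ((2 : ℝ) - n)) j x
      = (1 + c * ((2 : ℝ) - n) * ⟪x, x⟫ ^ (((2 : ℝ) - n) / 2 - 1)) * x j := by
  rw [pd, u_repr c, (hasFDerivAt_u c x hx).fderiv]
  simp [EuclideanSpace.inner_single_right]

lemma pd2_u (c : ℝ) (i j : Fin n) (x : EuclideanSpace ℝ (Fin n)) (hx : x ≠ 0) :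
    pd2 (fun y => ‖y‖ ^ 2 / 2 + c * ‖y‖ ^ ((2 : ℝ) - n)) i j x
      = (if i = j then 1 + c * ((2 : ℝ) - n) * ⟪x, x⟫ ^ (((2 : ℝ) - n) / 2 - 1) else 0)
        + (2 * (c * ((2 : ℝ) - n)) * (((2 : ℝ) - n) / 2 - 1)
            * ⟪x, x⟫ ^ (((2 : ℝ) - n) / 2 - 1 - 1)) * x i * x j := by
  set e₁ : ℝ := ((2 : ℝ) - n) / 2 - 1 with he₁
  have hev : pd (fun y : EuclideanSpace ℝ (Fin n) => ‖y‖ ^ 2 / 2 + c * ‖y‖ ^ ((2 : ℝ) - n)) j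
      =ᶠ[nhds x] (fun y => (1 + c * ((2 : ℝ) - n) * ⟪y, y⟫ ^ e₁) * y j) := by
    filter_upwards [IsOpen.mem_nhds isOpen_compl_singleton hx] with y hy
    exact pd_u c j y hy
  have hφ := ((hasFDerivAt_inner_rpow x hx e₁).const_mul (c * ((2 : ℝ) - n))).const_add 1
  have hψ : HasFDerivAt (fun y : EuclideanSpace ℝ (Fin n) => y j)
      (EuclideanSpace.proj (𝕜 := ℝ) j) x := (EuclideanSpace.proj (𝕜 := ℝ) j).hasFDerivAt
  have hg := hφ.mul hψ
  rw [pd2, pd, hev.fderiv_eq, (show HasFDerivAt (fun y : EuclideanSpace ℝ (Fin n) => (1 + c * ((2 : ℝ) - n) * ⟪y, y⟫ ^ e₁) * y j) _ x from hg).fderiv]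
  simp [EuclideanSpace.inner_single_right, EuclideanSpace.single_apply]
  by_cases h : i = j
  · subst h; simp; ring
  · simp [h, Ne.symm h]
    ring

lemma inner_rpow_eq (x : EuclideanSpace ℝ (Fin n)) (e : ℝ) :
    ⟪x, x⟫ ^ e = ‖x‖ ^ (2 * e) := by
  rw [real_inner_self_eq_norm_sq, ← Real.rpow_natCast ‖x‖ 2,
    ← Real.rpow_mul (norm_nonneg x)]
  norm_num

lemma hess_form (hn : 3 ≤ n) (c : ℝ) (x : EuclideanSpace ℝ (Fin n)) (hx : x ≠ 0) :
    hess (fun y => ‖y‖ ^ 2 / 2 + c * ‖y‖ ^ ((2 : ℝ) - n)) x =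
      Matrix.of fun i k =>
        (if i = k then 1 + c * ((2 : ℝ) - n) * ‖x‖ ^ (-(n : ℝ)) else 0)
          + (-(c * ((2 : ℝ) - n) * n) * ‖x‖ ^ (-(n : ℝ) - 2)) * x i * x k := by
  ext i k
  show pd2 _ i k x = _
  rw [pd2_u c i k x hx, inner_rpow_eq, inner_rpow_eq]
  have e1 : 2 * (((2 : ℝ) - n) / 2 - 1) = -(n : ℝ) := by ring
  have e2 : 2 * (((2 : ℝ) - n) / 2 - 1 - 1) = -(n : ℝ) - 2 := by ring
  rw [e1, e2]
  congr 1
  ring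

lemma abs_one_add_pow_sub_one (m : ℕ) (a : ℝ) (ha : |a| ≤ 1) :
    |(1 + a) ^ m - 1| ≤ 3 ^ m * |a| := by
  induction m with
  | zero => simpa using abs_nonneg a
  | succ m ih =>
    have hiden : (1 + a) ^ (m + 1) - 1 = (1 + a) * ((1 + a) ^ m - 1) + a := by ring
    have h1 : |1 + a| ≤ 2 := by
      calc |1 + a| ≤ |(1:ℝ)| + |a| := abs_add_le _ _
        _ ≤ 1 + 1 := by simp [ha]
        _ = 2 := by norm_num
    calc |(1 + a) ^ (m + 1) - 1| = |(1 + a) * ((1 + a) ^ m - 1) + a| := by rw [hiden]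
      _ ≤ |1 + a| * |(1 + a) ^ m - 1| + |a| := by
          rw [← abs_mul]; exact abs_add_le _ _
      _ ≤ 2 * (3 ^ m * |a|) + |a| := by
          have := abs_nonneg ((1 + a) ^ m - 1)
          nlinarith [abs_nonneg a]
      _ ≤ 3 ^ (m + 1) * |a| := by
          have h4 : (1:ℝ) ≤ 3 ^ m := one_le_pow₀ (by norm_num)
          have h5 : (3:ℝ) ^ (m + 1) = 3 * 3 ^ m := by rw [pow_succ]; ring
          nlinarith [mul_nonneg (sub_nonneg.mpr h4) (abs_nonneg a)]

lemma coord_abs_le_norm (x : EuclideanSpace ℝ (Fin n)) (i : Fin n) : |x i| ≤ ‖x‖ := by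
  have h := abs_real_inner_le_norm (EuclideanSpace.single i (1:ℝ)) x
  rw [EuclideanSpace.inner_single_left] at h
  simpa using h

end Aux

/-- For `u(x) = |x|²/2 + c|x|^{2-n}` and `j ≥ 2`, the `(1,j)` cofactor of the Hessian
satisfies `cof(D²u)_{1j} = cn(2-n)|x|^{-n-2}x₁x_j + O(|x|^{-2n})`. -/
theorem cofactor_one_j_expansion {n : ℕ} (hn : 3 ≤ n) (c : ℝ)
    (j : Fin n) (hj : j ≠ ⟨0, by omega⟩) :
    ∃ C R : ℝ, 0 < C ∧ ∀ x : EuclideanSpace ℝ (Fin n), R ≤ ‖x‖ →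
      |cof (hess (fun y => ‖y‖ ^ 2 / 2 + c * ‖y‖ ^ ((2 : ℝ) - n)) x)
          (⟨0, by omega⟩ : Fin n) j -
        c * n * ((2 : ℝ) - n) * ‖x‖ ^ (-(n : ℝ) - 2) * x ⟨0, by omega⟩ * x j|
      ≤ C * ‖x‖ ^ (-(2 * n : ℝ)) := by
  have hn' : 2 ≤ n := by omega
  have hn3 : (3:ℝ) ≤ (n:ℝ) := by exact_mod_cast hn
  set i0 : Fin n := ⟨0, by omega⟩ with hi0
  set K : ℝ := |c| * n * n + 1 with hK
  have h0K : 0 ≤ |c| * n * n := by positivity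
  have hK1 : 1 ≤ K := by rw [hK]; linarith
  have hKpos : 0 < K := by linarith
  refine ⟨3 ^ n * K ^ 2 + 1, 3 * K, by positivity, ?_⟩
  intro x hxR
  have hx1 : (1:ℝ) ≤ ‖x‖ := le_trans (by linarith) hxR
  have hxpos : (0:ℝ) < ‖x‖ := by linarith
  have hx : x ≠ 0 := by
    intro h
    rw [h, norm_zero] at hxpos
    exact lt_irrefl 0 hxpos
  set A : ℝ := c * ((2:ℝ) - n) * ‖x‖ ^ (-(n:ℝ)) with hA
  set B : ℝ := -(c * ((2:ℝ) - n) * n) * ‖x‖ ^ (-(n:ℝ) - 2) with hB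
  have hrn_pos : (0:ℝ) < ‖x‖ ^ (-(n:ℝ)) := Real.rpow_pos_of_pos hxpos _
  have hrn2_pos : (0:ℝ) < ‖x‖ ^ (-(n:ℝ) - 2) := Real.rpow_pos_of_pos hxpos _
  have hrn_le : ‖x‖ ^ (-(n:ℝ)) ≤ 1 / (3 * K) := by
    have h1 : ‖x‖ ^ (-(n:ℝ)) ≤ ‖x‖ ^ (-1:ℝ) :=
      Real.rpow_le_rpow_of_exponent_le hx1 (by linarith)
    rw [Real.rpow_neg_one] at h1
    have h2 : ‖x‖⁻¹ ≤ 1 / (3 * K) := by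
      rw [inv_eq_one_div]
      exact one_div_le_one_div_of_le (by positivity) hxR
    linarith
  have h2n : |(2:ℝ) - n| ≤ (n:ℝ) := by
    rw [abs_of_nonpos (by linarith)]
    linarith
  have hcp : |c * ((2:ℝ) - n)| ≤ K := by
    rw [abs_mul]
    have : |c| * |(2:ℝ) - n| ≤ |c| * n := mul_le_mul_of_nonneg_left h2n (abs_nonneg c)
    nlinarith [abs_nonneg c]
  have hcpn : |c * ((2:ℝ) - n) * n| ≤ K := by
    rw [abs_mul, abs_mul]
    have h1 : |c| * |(2:ℝ) - n| ≤ |c| * n := mul_le_mul_of_nonneg_left h2n (abs_nonneg c)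
    have h2 : |(n:ℝ)| = (n:ℝ) := abs_of_nonneg (by positivity)
    rw [h2]
    nlinarith [abs_nonneg c]
  have hA_abs : |A| ≤ K * ‖x‖ ^ (-(n:ℝ)) := by
    rw [hA, abs_mul, abs_of_pos hrn_pos]
    exact mul_le_mul_of_nonneg_right hcp hrn_pos.le
  have hA13 : |A| ≤ 1/3 := by
    have h1 : K * ‖x‖ ^ (-(n:ℝ)) ≤ K * (1 / (3 * K)) :=
      mul_le_mul_of_nonneg_left hrn_le hKpos.le
    have h2 : K * (1 / (3 * K)) = 1/3 := by field_simp
    exact le_trans hA_abs (le_trans h1 (le_of_eq h2))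
  have hB_abs : |B| ≤ K * ‖x‖ ^ (-(n:ℝ) - 2) := by
    rw [hB, abs_mul, abs_neg, abs_of_pos hrn2_pos]
    exact mul_le_mul_of_nonneg_right hcpn hrn2_pos.le
  have hSsum : (∑ l, x l * x l) = ‖x‖ ^ 2 := by
    rw [← real_inner_self_eq_norm_sq, PiLp.inner_apply]
    apply Finset.sum_congr rfl
    intros l _
    simp [mul_comm]; ring
  have hBS : B * (∑ l, x l * x l) = -(c * ((2:ℝ) - n) * n) * ‖x‖ ^ (-(n:ℝ)) := by
    rw [hSsum, hB, mul_assoc]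
    congr 1
    rw [← Real.rpow_natCast ‖x‖ 2, ← Real.rpow_add hxpos]
    congr 1
    push_cast
    ring
  have hBS13 : |B * (∑ l, x l * x l)| ≤ 1/3 := by
    rw [hBS, abs_mul, abs_neg, abs_of_pos hrn_pos]
    have h1 : |c * ((2:ℝ) - n) * n| * ‖x‖ ^ (-(n:ℝ)) ≤ K * (1 / (3 * K)) := by
      apply mul_le_mul hcpn hrn_le hrn_pos.le hKpos.le
    have h2 : K * (1 / (3 * K)) = 1/3 := by field_simp
    calc |c * ((2:ℝ) - n) * n| * ‖x‖ ^ (-(n:ℝ)) ≤ K * (1 / (3 * K)) := h1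
      _ = 1/3 := h2
  have hα : (1 + A) ≠ 0 := by
    have := (abs_le.mp hA13).1
    intro h
    linarith
  have hαS : (1 + A) + B * (∑ l, x l * x l) ≠ 0 := by
    have h1 := (abs_le.mp hA13).1
    have h2 := (abs_le.mp hBS13).1
    intro h
    linarith
  have hcof : cof (hess (fun y => ‖y‖ ^ 2 / 2 + c * ‖y‖ ^ ((2 : ℝ) - n)) x) i0 j
      = (1 + A) ^ (n - 2) *
          (((1 + A) + B * (∑ l, x l * x l)) * 0 - B * x j * x i0) := by
    show Matrix.adjugate (hess (fun y => ‖y‖ ^ 2 / 2 + c * ‖y‖ ^ ((2 : ℝ) - n)) x) j i0 = _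
    rw [hess_form hn c x hx, ← hA, ← hB]
    rw [adjugate_rank_one hn' (1 + A) B x hα hαS]
    simp only [Matrix.of_apply, if_neg hj]
  have harg : (1 + A) ^ (n - 2) *
        (((1 + A) + B * (∑ l, x l * x l)) * 0 - B * x j * x i0)
        - c * (n:ℝ) * ((2:ℝ) - n) * ‖x‖ ^ (-(n:ℝ) - 2) * x i0 * x j
      = (-(B * x i0 * x j)) * ((1 + A) ^ (n - 2) - 1) := by
    rw [hB]
    ring
  rw [hcof, harg]
  have h31 : |(1 + A) ^ (n - 2) - 1| ≤ 3 ^ n * (K * ‖x‖ ^ (-(n:ℝ))) := by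
    have hstep := abs_one_add_pow_sub_one (n - 2) A (by linarith)
    have hp : (3:ℝ) ^ (n - 2) ≤ 3 ^ n := pow_le_pow_right₀ (by norm_num) (by omega)
    calc |(1 + A) ^ (n - 2) - 1| ≤ 3 ^ (n - 2) * |A| := hstep
      _ ≤ 3 ^ n * (K * ‖x‖ ^ (-(n:ℝ))) := by
          apply mul_le_mul hp hA_abs (abs_nonneg A) (by positivity)
  have habs : |(-(B * x i0 * x j)) * ((1 + A) ^ (n - 2) - 1)|
      ≤ (K * ‖x‖ ^ (-(n:ℝ) - 2)) * ‖x‖ * ‖x‖ * (3 ^ n * (K * ‖x‖ ^ (-(n:ℝ)))) := by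
    rw [abs_mul, abs_neg, abs_mul, abs_mul]
    apply mul_le_mul _ h31 (abs_nonneg _) (by positivity)
    apply mul_le_mul _ (coord_abs_le_norm x j) (abs_nonneg _) (by positivity)
    exact mul_le_mul hB_abs (coord_abs_le_norm x i0) (abs_nonneg _) (by positivity)
  have hcomb : (K * ‖x‖ ^ (-(n:ℝ) - 2)) * ‖x‖ * ‖x‖ * (3 ^ n * (K * ‖x‖ ^ (-(n:ℝ))))
      = 3 ^ n * K ^ 2 * ‖x‖ ^ (-(2 * n : ℝ)) := by
    have step1 : (K * ‖x‖ ^ (-(n:ℝ) - 2)) * ‖x‖ * ‖x‖ * (3 ^ n * (K * ‖x‖ ^ (-(n:ℝ))))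
        = 3 ^ n * K ^ 2 * (‖x‖ ^ (-(n:ℝ) - 2) * ‖x‖ ^ (((2:ℕ)):ℝ) * ‖x‖ ^ (-(n:ℝ))) := by
      rw [Real.rpow_natCast]
      ring
    rw [step1, ← Real.rpow_add hxpos, ← Real.rpow_add hxpos]
    congr 1
    push_cast
    ring
  have hfin : 3 ^ n * K ^ 2 * ‖x‖ ^ (-(2 * n : ℝ))
      ≤ (3 ^ n * K ^ 2 + 1) * ‖x‖ ^ (-(2 * n : ℝ)) := by
    have hr : (0:ℝ) < ‖x‖ ^ (-(2 * n : ℝ)) := Real.rpow_pos_of_pos hxpos _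
    exact mul_le_mul_of_nonneg_right (by linarith) hr.le
  calc |(-(B * x i0 * x j)) * ((1 + A) ^ (n - 2) - 1)|
      ≤ (K * ‖x‖ ^ (-(n:ℝ) - 2)) * ‖x‖ * ‖x‖ * (3 ^ n * (K * ‖x‖ ^ (-(n:ℝ)))) := habs
    _ = 3 ^ n * K ^ 2 * ‖x‖ ^ (-(2 * n : ℝ)) := hcomb
    _ ≤ (3 ^ n * K ^ 2 + 1) * ‖x‖ ^ (-(2 * n : ℝ)) := hfin
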